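/- Let S be a uniformly random size-s subset of {1,…,n} and μ̃_S = (1/s) Σ_{i∈S} ∇f_i(w̃). If each f_i is convex with L-Lipschitz gradient, w* minimizes F = (1/n)Σf_i, and ‖∇f_i(w*)‖ ≤ ξ for all i, then E_S[‖μ̃_S‖²] ≤ (4L/s)·(F(w̃) − F(w*)) + 2ξ²/s + 4L(F(w̃) − F(w*)). -/

import Mathlib

open scoped RealInnerProductSpace BigOperators

open Finset in
lemma count_subsets {α : Type*} [DecidableEq α] (u t : Finset α) (s : ℕ)
    (htu : t ⊆ u) (hts : t.card ≤ s) :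
    ((u.powersetCard s).filter (fun S => t ⊆ S)).card
      = (u.card - t.card).choose (s - t.card) := by
  rw [← Finset.card_sdiff_of_subset htu, ← Finset.card_powersetCard (s - t.card) (u \ t)]
  apply Finset.card_bij (fun S _ => S \ t)
  · intro S hS
    simp only [mem_filter, mem_powersetCard] at hS
    simp only [mem_powersetCard]
    exact ⟨sdiff_subset_sdiff hS.1.1 le_rfl, by rw [card_sdiff_of_subset hS.2, hS.1.2]⟩
  · intro S₁ h₁ S₂ h₂ h
    simp only [mem_filter, mem_powersetCard] at h₁ h₂
    rw [← sdiff_union_of_subset h₁.2, ← sdiff_union_of_subset h₂.2, h]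
  · intro A hA
    simp only [mem_powersetCard] at hA
    refine ⟨A ∪ t, ?_, ?_⟩
    · simp only [mem_filter, mem_powersetCard]
      have hdisj : Disjoint A t := Finset.disjoint_of_subset_left hA.1 sdiff_disjoint
      refine ⟨⟨union_subset (hA.1.trans sdiff_subset) htu, ?_⟩, subset_union_right⟩
      rw [card_union_of_disjoint hdisj, hA.2]
      omega
    · have hdisj : Disjoint A t := Finset.disjoint_of_subset_left hA.1 sdiff_disjoint
      rw [union_sdiff_right, sdiff_eq_self_of_disjoint hdisj]

lemma swap_sum {α : Type*} [DecidableEq α] (P : Finset (Finset α)) (u : Finset α)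
    (a : α → ℝ) (hP : ∀ S ∈ P, S ⊆ u) :
    ∑ S ∈ P, ∑ i ∈ S, a i
      = ∑ i ∈ u, ((P.filter (fun S => i ∈ S)).card : ℝ) * a i := by
  have h1 : ∀ S ∈ P, ∑ i ∈ S, a i = ∑ i ∈ u, if i ∈ S then a i else 0 := by
    intro S hS
    rw [Finset.sum_ite_mem, Finset.inter_eq_right.mpr (hP S hS)]
  rw [Finset.sum_congr rfl h1, Finset.sum_comm]
  refine Finset.sum_congr rfl fun i _ => ?_
  rw [← Finset.sum_filter, Finset.sum_const, nsmul_eq_mul]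

lemma swap_sum2 {α : Type*} [DecidableEq α] (P : Finset (Finset α)) (u : Finset α)
    (c : α → α → ℝ) (hP : ∀ S ∈ P, S ⊆ u) :
    ∑ S ∈ P, ∑ i ∈ S, ∑ j ∈ S, c i j
      = ∑ q ∈ u ×ˢ u,
          ((P.filter (fun S => q.1 ∈ S ∧ q.2 ∈ S)).card : ℝ) * c q.1 q.2 := by
  have h1 : ∀ S ∈ P, ∑ i ∈ S, ∑ j ∈ S, c i j
      = ∑ q ∈ u ×ˢ u, if q.1 ∈ S ∧ q.2 ∈ S then c q.1 q.2 else 0 := by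
    intro S hS
    have e1 : (∑ q ∈ u ×ˢ u, if q.1 ∈ S ∧ q.2 ∈ S then c q.1 q.2 else 0)
        = ∑ q ∈ u ×ˢ u, if q ∈ S ×ˢ S then c q.1 q.2 else 0 := by
      refine Finset.sum_congr rfl fun q _ => ?_
      simp [Finset.mem_product]
    rw [e1, Finset.sum_ite_mem, Finset.inter_eq_right.mpr
      (Finset.product_subset_product (hP S hS) (hP S hS))]
    exact (Finset.sum_product (s := S) (t := S) (f := fun q => c q.1 q.2)).symm
  rw [Finset.sum_congr rfl h1, Finset.sum_comm]
  refine Finset.sum_congr rfl fun q _ => ?_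
  rw [← Finset.sum_filter, Finset.sum_const, nsmul_eq_mul]

set_option maxHeartbeats 1000000 in
/-- Second-moment bound on the surrogate gradient:
`E_S‖μ̃_S‖² ≤ (4L/s)(F(w̃) − F(w*)) + 2ξ²/s + 4L(F(w̃) − F(w*))`. -/
theorem stmt_9 {p n : ℕ} (hn : 0 < n) (s : ℕ) (hs : 1 ≤ s) (hsn : s ≤ n)
    (L ξ : ℝ) (hL : 0 < L)
    (f : Fin n → EuclideanSpace ℝ (Fin p) → ℝ)
    (g : Fin n → EuclideanSpace ℝ (Fin p) → EuclideanSpace ℝ (Fin p))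
    (hconv : ∀ i w w', f i w' + ⟪g i w', w - w'⟫ ≤ f i w)
    (hsmooth : ∀ i w w',
      f i w ≤ f i w' + ⟪g i w', w - w'⟫ + L / 2 * ‖w - w'‖ ^ 2)
    (F : EuclideanSpace ℝ (Fin p) → ℝ)
    (hF : ∀ w, F w = (1 / n : ℝ) * ∑ i, f i w)
    (wstar : EuclideanSpace ℝ (Fin p))
    (hmin : ∀ w, F wstar ≤ F w)
    (hxi : ∀ i, ‖g i wstar‖ ≤ ξ)
    (wtilde : EuclideanSpace ℝ (Fin p)) :
    ((n.choose s : ℝ))⁻¹ *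
        ∑ S ∈ Finset.powersetCard s (Finset.univ : Finset (Fin n)),
          ‖(1 / s : ℝ) • ∑ i ∈ S, g i wtilde‖ ^ 2
      ≤ (4 * L / s) * (F wtilde - F wstar) + 2 * ξ ^ 2 / s
        + 4 * L * (F wtilde - F wstar) := by
  have hnR : (0:ℝ) < n := by exact_mod_cast hn
  have hsR : (0:ℝ) < s := by exact_mod_cast hs
  set x : Fin n → EuclideanSpace ℝ (Fin p) := fun i => g i wtilde with hx
  set y : Fin n → EuclideanSpace ℝ (Fin p) := fun i => g i wstar with hy
  set D : Fin n → ℝ := fun i => f i wtilde - f i wstar - ⟪y i, wtilde - wstar⟫ with hDdef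
  have hsumF : ∀ w, ∑ i, f i w = (n:ℝ) * F w := by
    intro w; rw [hF w]; field_simp
  -- Step A : ∑ y = 0
  have hy0 : ∑ i, y i = 0 := by
    set v := ∑ i, y i with hv
    set c : ℝ := 1 / (L * n) with hc
    have hc0 : 0 < c := by positivity
    set w : EuclideanSpace ℝ (Fin p) := wstar - c • v with hw
    have hws : w - wstar = -(c • v) := by rw [hw]; exact sub_sub_cancel_left wstar (c • v)
    have hsum := Finset.sum_le_sum (fun i (_ : i ∈ Finset.univ) => hsmooth i w wstar)
    rw [Finset.sum_add_distrib, Finset.sum_add_distrib, Finset.sum_const,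
      Finset.card_univ, Fintype.card_fin, ← sum_inner, hsumF w, hsumF wstar] at hsum
    rw [hws] at hsum
    have hinner : ⟪v, -(c • v)⟫ = -(c * ‖v‖^2) := by
      rw [inner_neg_right, real_inner_smul_right, real_inner_self_eq_norm_sq]
    have hnorm : ‖-(c • v)‖^2 = c^2 * ‖v‖^2 := by
      rw [norm_neg, norm_smul, mul_pow, Real.norm_eq_abs, sq_abs]
    rw [hinner, hnorm] at hsum
    have hminw := hmin w
    rw [nsmul_eq_mul] at hsum
    have hvle : ‖v‖^2 ≤ 0 := by
      have h1 : (n:ℝ) * F wstar ≤ (n:ℝ) * F w :=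
        mul_le_mul_of_nonneg_left hminw (le_of_lt hnR)
      have e : (n:ℝ) * (L/2 * (c^2 * ‖v‖^2)) = c/2 * ‖v‖^2 := by
        rw [hc]; field_simp
      rw [e] at hsum
      have h2 : c / 2 * ‖v‖^2 ≤ 0 := by linarith
      nlinarith [h2, hc0]
    have hv2 : ‖v‖^2 = 0 := le_antisymm hvle (sq_nonneg _)
    have : ‖v‖ = 0 := pow_eq_zero_iff two_ne_zero |>.mp hv2
    exact norm_eq_zero.mp this
  -- Step B : co-coercivity
  have hB : ∀ i, ‖x i - y i‖^2 ≤ 2 * L * D i := by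
    intro i
    set h := x i - y i with hh
    set z : EuclideanSpace ℝ (Fin p) := wtilde - L⁻¹ • h with hz
    have hzs : z - wstar = (wtilde - wstar) - L⁻¹ • h := by
      rw [hz]; exact sub_right_comm wtilde (L⁻¹ • h) wstar
    have hzt : z - wtilde = -(L⁻¹ • h) := by
      rw [hz]; exact sub_sub_cancel_left wtilde (L⁻¹ • h)
    have h1 : f i wstar + (⟪y i, wtilde - wstar⟫ - L⁻¹ * ⟪y i, h⟫) ≤ f i z := by
      have t := hconv i z wstar
      rw [hzs, inner_sub_right, real_inner_smul_right] at t
      exact t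
    have h2 : f i z ≤ f i wtilde + -(L⁻¹ * ⟪x i, h⟫) + L / 2 * (L⁻¹^2 * ‖h‖^2) := by
      have t := hsmooth i z wtilde
      rw [hzt, inner_neg_right, real_inner_smul_right, norm_neg, norm_smul,
        mul_pow, Real.norm_eq_abs, sq_abs] at t
      exact t
    have e4 : L⁻¹ * ⟪x i, h⟫ - L⁻¹ * ⟪y i, h⟫ = L⁻¹ * ‖h‖^2 := by
      rw [← mul_sub, ← inner_sub_left, ← hh, real_inner_self_eq_norm_sq]
    have e2 : L / 2 * (L⁻¹^2 * ‖h‖^2) = L⁻¹ / 2 * ‖h‖^2 := by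
      field_simp
    have e6 : L⁻¹ / 2 * ‖h‖^2 ≤ D i := by
      simp only [hDdef]
      linarith
    have e7 : ‖h‖^2 = 2 * L * (L⁻¹ / 2 * ‖h‖^2) := by
      field_simp
    rw [e7]
    exact mul_le_mul_of_nonneg_left e6 (by positivity)
  have hD0 : ∀ i, 0 ≤ D i := by
    intro i
    have t : f i wstar + ⟪y i, wtilde - wstar⟫ ≤ f i wtilde := hconv i wtilde wstar
    simp only [hDdef]; linarith
  -- Step C
  have hC : ∑ i, D i = (n:ℝ) * (F wtilde - F wstar) := by
    simp only [hDdef]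
    rw [Finset.sum_sub_distrib, Finset.sum_sub_distrib, ← sum_inner, hy0,
      hsumF, hsumF, inner_zero_left]
    ring
  have hΔ : 0 ≤ F wtilde - F wstar := sub_nonneg.mpr (hmin wtilde)
  have hξ0 : 0 ≤ ξ := le_trans (norm_nonneg _) (hxi ⟨0, hn⟩)
  have hA1 : ∑ i, ‖x i - y i‖^2 ≤ 2 * L * ((n:ℝ) * (F wtilde - F wstar)) := by
    calc ∑ i, ‖x i - y i‖^2 ≤ ∑ i, 2 * L * D i := Finset.sum_le_sum fun i _ => hB i
      _ = 2 * L * ∑ i, D i := by rw [Finset.mul_sum]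
      _ = _ := by rw [hC]
  have hA2 : ∑ i, ‖y i‖^2 ≤ (n:ℝ) * ξ^2 := by
    calc ∑ i, ‖y i‖^2 ≤ ∑ _i : Fin n, ξ^2 :=
        Finset.sum_le_sum fun i _ => pow_le_pow_left₀ (norm_nonneg _) (hxi i) 2
      _ = (n:ℝ) * ξ^2 := by simp [Finset.card_univ]
  -- combinatorics
  set P := Finset.powersetCard s (Finset.univ : Finset (Fin n)) with hP
  have hPsub : ∀ S ∈ P, S ⊆ (Finset.univ : Finset (Fin n)) := fun S _ => Finset.subset_univ S
  have hPcard : ∀ S ∈ P, S.card = s := fun S hS => (Finset.mem_powersetCard.mp hS).2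
  set C1 := (n-1).choose (s-1) with hC1
  set C2 := if 2 ≤ s then (n-2).choose (s-2) else 0 with hC2
  have hcard1 : ∀ i : Fin n, (P.filter (fun S => i ∈ S)).card = C1 := by
    intro i
    have e : P.filter (fun S => i ∈ S)
        = P.filter (fun S => ({i} : Finset (Fin n)) ⊆ S) := by
      apply Finset.filter_congr; intro S _; simp
    rw [e, hP, count_subsets _ _ _ (Finset.subset_univ _) (by simpa using hs)]
    simp [hC1]
  have hcard2 : ∀ i j : Fin n, i ≠ j →
      (P.filter (fun S => i ∈ S ∧ j ∈ S)).card = C2 := by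
    intro i j hij
    have e : P.filter (fun S => i ∈ S ∧ j ∈ S)
        = P.filter (fun S => ({i, j} : Finset (Fin n)) ⊆ S) := by
      apply Finset.filter_congr; intro S _; simp [Finset.insert_subset_iff]
    have hcardij : ({i, j} : Finset (Fin n)).card = 2 := by
      rw [Finset.card_insert_of_notMem (by simp [hij]), Finset.card_singleton]
    by_cases h2s : 2 ≤ s
    · rw [e, hP, count_subsets _ _ _ (Finset.subset_univ _) (by rw [hcardij]; exact h2s)]
      simp [hC2, h2s, hcardij]
    · have hempty : P.filter (fun S => ({i, j} : Finset (Fin n)) ⊆ S) = ∅ := by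
        rw [Finset.filter_eq_empty_iff]
        intro S hS hsub
        have h1 := Finset.card_le_card hsub
        rw [hcardij, hPcard S hS] at h1
        omega
      rw [e, hempty]
      simp [hC2, h2s]
  have bound1 : ∑ S ∈ P, ∑ i ∈ S, ‖x i - y i‖^2 = (C1:ℝ) * ∑ i, ‖x i - y i‖^2 := by
    rw [swap_sum P Finset.univ _ hPsub, Finset.mul_sum]
    exact Finset.sum_congr rfl fun i _ => by rw [hcard1 i]
  have expand : ∀ S : Finset (Fin n), ‖∑ i ∈ S, y i‖^2 = ∑ i ∈ S, ∑ j ∈ S, ⟪y i, y j⟫ := by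
    intro S
    rw [← real_inner_self_eq_norm_sq, sum_inner]
    exact Finset.sum_congr rfl fun i _ => inner_sum _ _ _
  have bound2 : ∑ S ∈ P, ‖∑ i ∈ S, y i‖^2 ≤ (C1:ℝ) * ∑ i, ‖y i‖^2 := by
    have e1 : ∑ S ∈ P, ‖∑ i ∈ S, y i‖^2
        = ∑ q ∈ Finset.univ ×ˢ (Finset.univ : Finset (Fin n)),
            ((P.filter (fun S => q.1 ∈ S ∧ q.2 ∈ S)).card : ℝ) * ⟪y q.1, y q.2⟫ := by
      rw [Finset.sum_congr rfl fun S _ => expand S]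
      exact swap_sum2 P Finset.univ _ hPsub
    have e2 : ∑ q ∈ Finset.univ ×ˢ (Finset.univ : Finset (Fin n)),
            ((P.filter (fun S => q.1 ∈ S ∧ q.2 ∈ S)).card : ℝ) * ⟪y q.1, y q.2⟫
        = ∑ q ∈ Finset.univ ×ˢ (Finset.univ : Finset (Fin n)),
            ((C2:ℝ) * ⟪y q.1, y q.2⟫
              + if q.1 = q.2 then ((C1:ℝ) - (C2:ℝ)) * ⟪y q.1, y q.2⟫ else 0) := by
      refine Finset.sum_congr rfl fun q _ => ?_
      by_cases hq : q.1 = q.2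
      · rw [if_pos hq]
        have e : P.filter (fun S => q.1 ∈ S ∧ q.2 ∈ S) = P.filter (fun S => q.1 ∈ S) := by
          apply Finset.filter_congr; intro S _; rw [← hq]; simp
        rw [e, hcard1 q.1]; ring
      · rw [if_neg hq, hcard2 _ _ hq]; ring
    have e3 : ∑ q ∈ Finset.univ ×ˢ (Finset.univ : Finset (Fin n)), ⟪y q.1, y q.2⟫ = 0 := by
      rw [Finset.sum_product (f := fun q : Fin n × Fin n => ⟪y q.1, y q.2⟫)]
      simp only []
      rw [show (∑ i : Fin n, ∑ j : Fin n, ⟪y i, y j⟫) = ⟪∑ i : Fin n, y i, ∑ j : Fin n, y j⟫ by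
        rw [sum_inner]; exact Finset.sum_congr rfl fun i _ => (inner_sum _ _ _).symm]
      rw [hy0, inner_zero_left]
    have e4 : ∑ q ∈ Finset.univ ×ˢ (Finset.univ : Finset (Fin n)),
          (if q.1 = q.2 then ((C1:ℝ) - (C2:ℝ)) * ⟪y q.1, y q.2⟫ else 0)
        = ((C1:ℝ) - (C2:ℝ)) * ∑ i, ‖y i‖^2 := by
      rw [Finset.sum_product
        (f := fun q : Fin n × Fin n => if q.1 = q.2 then ((C1:ℝ) - (C2:ℝ)) * ⟪y q.1, y q.2⟫ else 0)]
      rw [Finset.mul_sum]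
      refine Finset.sum_congr rfl fun i _ => ?_
      rw [Finset.sum_ite_eq Finset.univ i (fun j => ((C1:ℝ) - (C2:ℝ)) * ⟪y i, y j⟫),
        if_pos (Finset.mem_univ i), real_inner_self_eq_norm_sq]
    rw [e1, e2, Finset.sum_add_distrib, ← Finset.mul_sum, e3, mul_zero, zero_add, e4]
    have hyn : (0:ℝ) ≤ ∑ i, ‖y i‖^2 := Finset.sum_nonneg fun i _ => sq_nonneg _
    have hC2n : (0:ℝ) ≤ (C2:ℝ) := Nat.cast_nonneg _
    nlinarith
  -- pointwise bound
  have hkey : ∀ S ∈ P, ‖(1 / s : ℝ) • ∑ i ∈ S, x i‖^2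
      ≤ (1/(s:ℝ))^2 * (2 * s * (∑ i ∈ S, ‖x i - y i‖^2) + 2 * ‖∑ i ∈ S, y i‖^2) := by
    intro S hS
    have hsplit : ∑ i ∈ S, x i = (∑ i ∈ S, (x i - y i)) + ∑ i ∈ S, y i := by
      rw [← Finset.sum_add_distrib]
      exact Finset.sum_congr rfl fun i _ => (sub_add_cancel (x i) (y i)).symm
    have hn1 : ‖(1 / s : ℝ) • ∑ i ∈ S, x i‖^2 = (1/(s:ℝ))^2 * ‖∑ i ∈ S, x i‖^2 := by
      rw [norm_smul, mul_pow, Real.norm_eq_abs, sq_abs]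
    rw [hn1, hsplit]
    have h2ab : ‖(∑ i ∈ S, (x i - y i)) + ∑ i ∈ S, y i‖^2
        ≤ 2 * ‖∑ i ∈ S, (x i - y i)‖^2 + 2 * ‖∑ i ∈ S, y i‖^2 := by
      have h := norm_add_le (∑ i ∈ S, (x i - y i)) (∑ i ∈ S, y i)
      nlinarith [norm_nonneg (∑ i ∈ S, (x i - y i)), norm_nonneg (∑ i ∈ S, y i),
        sq_nonneg (‖∑ i ∈ S, (x i - y i)‖ - ‖∑ i ∈ S, y i‖), norm_nonneg ((∑ i ∈ S, (x i - y i)) + ∑ i ∈ S, y i)]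
    have hcs : ‖∑ i ∈ S, (x i - y i)‖^2 ≤ (s:ℝ) * ∑ i ∈ S, ‖x i - y i‖^2 := by
      have h1 : ‖∑ i ∈ S, (x i - y i)‖ ≤ ∑ i ∈ S, ‖x i - y i‖ := norm_sum_le _ _
      have h2 : (∑ i ∈ S, ‖x i - y i‖)^2 ≤ (S.card : ℝ) * ∑ i ∈ S, ‖x i - y i‖^2 :=
        sq_sum_le_card_mul_sum_sq
      have h3 : ‖∑ i ∈ S, (x i - y i)‖^2 ≤ (∑ i ∈ S, ‖x i - y i‖)^2 :=
        pow_le_pow_left₀ (norm_nonneg _) h1 2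
      rw [hPcard S hS] at h2
      linarith
    have hfac : (0:ℝ) ≤ (1/(s:ℝ))^2 := sq_nonneg _
    have := mul_le_mul_of_nonneg_left
      (by linarith : ‖(∑ i ∈ S, (x i - y i)) + ∑ i ∈ S, y i‖^2
        ≤ 2 * s * (∑ i ∈ S, ‖x i - y i‖^2) + 2 * ‖∑ i ∈ S, y i‖^2) hfac
    exact this
  -- assembly
  have hchoosepos : (0:ℝ) < (n.choose s : ℝ) := by exact_mod_cast Nat.choose_pos hsn
  have hC1C : (n:ℝ) * (C1:ℝ) = (s:ℝ) * (n.choose s : ℝ) := by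
    obtain ⟨m, rfl⟩ : ∃ m, n = m + 1 := ⟨n - 1, by omega⟩
    obtain ⟨t, rfl⟩ : ∃ t, s = t + 1 := ⟨s - 1, by omega⟩
    have hnat := Nat.add_one_mul_choose_eq m t
    have hnat2 : (m + 1) * C1 = (m + 1).choose (t + 1) * (t + 1) := by
      rw [hC1]; simpa using hnat
    exact_mod_cast by rw [hnat2]; ring
  have hC1nn : (0:ℝ) ≤ (C1:ℝ) := Nat.cast_nonneg _
  have step1 : ∑ S ∈ P, ‖(1 / s : ℝ) • ∑ i ∈ S, x i‖^2
      ≤ (1/(s:ℝ))^2 * (2 * s * ((C1:ℝ) * (2 * L * ((n:ℝ) * (F wtilde - F wstar))))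
          + 2 * ((C1:ℝ) * ((n:ℝ) * ξ^2))) := by
    calc ∑ S ∈ P, ‖(1 / s : ℝ) • ∑ i ∈ S, x i‖^2
        ≤ ∑ S ∈ P, (1/(s:ℝ))^2 * (2 * s * (∑ i ∈ S, ‖x i - y i‖^2) + 2 * ‖∑ i ∈ S, y i‖^2) :=
          Finset.sum_le_sum hkey
      _ = (1/(s:ℝ))^2 * (2 * s * (∑ S ∈ P, ∑ i ∈ S, ‖x i - y i‖^2)
            + 2 * ∑ S ∈ P, ‖∑ i ∈ S, y i‖^2) := by
          rw [show (2 * (s:ℝ) * ∑ S ∈ P, ∑ i ∈ S, ‖x i - y i‖^2)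
              = ∑ S ∈ P, 2 * (s:ℝ) * ∑ i ∈ S, ‖x i - y i‖^2 from by rw [Finset.mul_sum],
            show ((2:ℝ) * ∑ S ∈ P, ‖∑ i ∈ S, y i‖^2)
              = ∑ S ∈ P, 2 * ‖∑ i ∈ S, y i‖^2 from by rw [Finset.mul_sum],
            ← Finset.sum_add_distrib, Finset.mul_sum]
      _ ≤ _ := by
          have b1 := bound1
          have b2 := bound2
          have hA1' : (C1:ℝ) * ∑ i, ‖x i - y i‖^2
              ≤ (C1:ℝ) * (2 * L * ((n:ℝ) * (F wtilde - F wstar))) :=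
            mul_le_mul_of_nonneg_left hA1 hC1nn
          have hA2' : (C1:ℝ) * ∑ i, ‖y i‖^2 ≤ (C1:ℝ) * ((n:ℝ) * ξ^2) :=
            mul_le_mul_of_nonneg_left hA2 hC1nn
          have hss : (0:ℝ) ≤ 2 * s := by positivity
          apply mul_le_mul_of_nonneg_left _ (sq_nonneg _)
          rw [bound1]
          nlinarith [bound2]
  have step2 : ((n.choose s : ℝ))⁻¹ * ∑ S ∈ P, ‖(1 / s : ℝ) • ∑ i ∈ S, x i‖^2
      ≤ ((n.choose s : ℝ))⁻¹ * ((1/(s:ℝ))^2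
          * (2 * s * ((C1:ℝ) * (2 * L * ((n:ℝ) * (F wtilde - F wstar))))
            + 2 * ((C1:ℝ) * ((n:ℝ) * ξ^2)))) :=
    mul_le_mul_of_nonneg_left step1 (inv_nonneg.mpr (le_of_lt hchoosepos))
  have step3 : ((n.choose s : ℝ))⁻¹ * ((1/(s:ℝ))^2
          * (2 * s * ((C1:ℝ) * (2 * L * ((n:ℝ) * (F wtilde - F wstar))))
            + 2 * ((C1:ℝ) * ((n:ℝ) * ξ^2))))
      = 4 * L * (F wtilde - F wstar) + 2 * ξ^2 / s := by
    have hcs : (n.choose s : ℝ) ≠ 0 := ne_of_gt hchoosepos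
    have hsne : (s:ℝ) ≠ 0 := ne_of_gt hsR
    field_simp
    linear_combination (2*ξ^2 + 4*(s:ℝ)*L*(F wtilde - F wstar)) * hC1C
  have hfinal : 4 * L * (F wtilde - F wstar) + 2 * ξ^2 / s
      ≤ (4 * L / s) * (F wtilde - F wstar) + 2 * ξ ^ 2 / s + 4 * L * (F wtilde - F wstar) := by
    have : 0 ≤ (4 * L / s) * (F wtilde - F wstar) := by positivity
    linarith
  calc ((n.choose s : ℝ))⁻¹ * ∑ S ∈ P, ‖(1 / s : ℝ) • ∑ i ∈ S, x i‖^2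
      ≤ 4 * L * (F wtilde - F wstar) + 2 * ξ^2 / s := by rw [← step3]; exact step2
    _ ≤ _ := hfinal
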